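/- Let Q ∈ ℝ^{n×n} be a matrix with all entries nonnegative, a ∈ ℝⁿ with all entries strictly positive, and define f : ℝⁿ → ℝ by f(x) := ⟨a, x⟩ + ⟨x, Qx⟩, so ∇f(x) = a + (Q + Qᵀ)x. Then (i) ∇f is Lipschitz continuous on ℝⁿ, and (ii) for every closed convex set C ⊆ ℝⁿ₊ (the nonnegative orthant), f satisfies condition (B) on C: for every x ∈ C and every nonzero d in the asymptotic cone C_∞, ⟨∇f(x), d⟩ > 0. -/

import Mathlib

open scoped RealInnerProductSpace

variable {n : ℕ}

lemma euclid_clm_apply (Q : Matrix (Fin n) (Fin n) ℝ) (x : EuclideanSpace ℝ (Fin n)) (i : Fin n) :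
    (Matrix.toEuclideanCLM (𝕜 := ℝ) Q x) i = ∑ j, Q i j * x j := by
  have h := Matrix.ofLp_toEuclideanCLM (𝕜 := ℝ) Q x
  have := congrFun h i
  simpa [Matrix.mulVec, dotProduct] using this

lemma grad_key (Q : Matrix (Fin n) (Fin n) ℝ) (a : EuclideanSpace ℝ (Fin n))
    (f : EuclideanSpace ℝ (Fin n) → ℝ)
    (hf : ∀ z : EuclideanSpace ℝ (Fin n),
      f z = (∑ i, a i * z i) + ∑ i, z i * ∑ j, Q i j * z j)
    (x : EuclideanSpace ℝ (Fin n)) :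
    HasGradientAt f (a + Matrix.toEuclideanCLM (𝕜 := ℝ) Q x
      + Matrix.toEuclideanCLM (𝕜 := ℝ) Q.transpose x) x := by
  set M := Matrix.toEuclideanCLM (𝕜 := ℝ) Q with hM
  set N := Matrix.toEuclideanCLM (𝕜 := ℝ) Q.transpose with hN
  have hf' : f = fun z => ⟪a, z⟫ + ⟪z, M z⟫ := by
    funext z
    rw [hf]
    simp [PiLp.inner_apply, RCLike.inner_apply, euclid_clm_apply, hM]
    congr 1 <;> exact Finset.sum_congr rfl fun _ _ => mul_comm _ _
  rw [hasGradientAt_iff_hasFDerivAt, hf']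
  have h1 : HasFDerivAt (fun z : EuclideanSpace ℝ (Fin n) => ⟪a, z⟫)
      (innerSL ℝ a) x := (innerSL ℝ a).hasFDerivAt
  have h2 : HasFDerivAt (fun z : EuclideanSpace ℝ (Fin n) => ⟪z, M z⟫)
      ((fderivInnerCLM ℝ (x, M x)).comp
        ((ContinuousLinearMap.id ℝ _).prod M)) x :=
    (hasFDerivAt_id x).inner ℝ M.hasFDerivAt
  have h := h1.add h2
  refine h.congr_fderiv ?_
  ext h
  simp only [ContinuousLinearMap.add_apply, ContinuousLinearMap.comp_apply,
    ContinuousLinearMap.prod_apply, ContinuousLinearMap.id_apply, fderivInnerCLM_apply,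
    InnerProductSpace.toDual_apply_apply, innerSL_apply_apply]
  have hNM : ⟪x, M h⟫ = ⟪N x, h⟫ := by
    simp only [PiLp.inner_apply, RCLike.inner_apply, starRingEnd_apply, star_trivial,
      euclid_clm_apply, hM, hN, Matrix.transpose_apply, Finset.mul_sum, Finset.sum_mul]
    rw [Finset.sum_comm]
    congr 1; ext i; congr 1; ext j; ring
  rw [inner_add_left, inner_add_left, hNM, real_inner_comm (M x) h]
  ring

/-- For `f(x) = ⟨a, x⟩ + ⟨x, Q x⟩` with `Q` entrywise nonnegative and `a` entrywise
positive: (i) `∇f` is Lipschitz continuous on `ℝⁿ`, and (ii) `f` satisfies condition (B)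
on every closed convex subset `C` of the nonnegative orthant. -/
theorem quadratic_example_A_and_B (n : ℕ)
    (Q : Matrix (Fin n) (Fin n) ℝ) (hQ : ∀ i j, 0 ≤ Q i j)
    (a : EuclideanSpace ℝ (Fin n)) (ha : ∀ i, 0 < a i)
    (f : EuclideanSpace ℝ (Fin n) → ℝ)
    (hf : ∀ z : EuclideanSpace ℝ (Fin n),
      f z = (∑ i, a i * z i) + ∑ i, z i * ∑ j, Q i j * z j) :
    (∃ L : ℝ, 0 ≤ L ∧ ∀ x y : EuclideanSpace ℝ (Fin n),
      ‖gradient f x - gradient f y‖ ≤ L * ‖x - y‖) ∧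
    (∀ C : Set (EuclideanSpace ℝ (Fin n)), IsClosed C → Convex ℝ C →
      C ⊆ {z : EuclideanSpace ℝ (Fin n) | ∀ i, 0 ≤ z i} →
      ∀ x ∈ C, ∀ d : EuclideanSpace ℝ (Fin n),
        (∀ y ∈ C, ∀ t : ℝ, 0 ≤ t → y + t • d ∈ C) → d ≠ 0 → 0 < ⟪gradient f x, d⟫) := by
  set M := Matrix.toEuclideanCLM (𝕜 := ℝ) Q with hM
  set N := Matrix.toEuclideanCLM (𝕜 := ℝ) Q.transpose with hN
  have hgrad : ∀ x, gradient f x = a + M x + N x := fun x =>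
    (grad_key Q a f hf x).gradient
  constructor
  · refine ⟨‖M + N‖, norm_nonneg _, fun x y => ?_⟩
    have : gradient f x - gradient f y = (M + N) (x - y) := by
      rw [hgrad, hgrad]
      simp only [ContinuousLinearMap.add_apply, map_sub]
      abel
    rw [this]
    exact (M + N).le_opNorm _
  · intro C _ _ hCpos x hx d hrec hd
    -- d is entrywise nonnegative
    have hdpos : ∀ i, 0 ≤ d i := by
      intro i
      by_contra hlt
      push_neg at hlt
      set t := (x i + 1) / (-(d i)) with ht
      have htpos : 0 ≤ t := div_nonneg (by have := (hCpos hx) i; linarith) (by linarith)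
      have hmem := hCpos (hrec x hx t htpos) i
      have hcoord : (x + t • d) i = x i + t * d i := by
        simp [PiLp.add_apply, PiLp.smul_apply]
      rw [hcoord, ht] at hmem
      have hne : d i ≠ 0 := ne_of_lt hlt
      have heq : (x i + 1) / -d i * d i = -(x i + 1) := by
        rw [div_mul_eq_mul_div, div_neg, mul_div_assoc, div_self hne, mul_one]
      rw [heq] at hmem
      linarith
    have hxpos : ∀ i, 0 ≤ x i := hCpos hx
    -- gradient entries are positive
    have hgpos : ∀ i, 0 < (gradient f x) i := by
      intro i
      rw [hgrad]
      have h1 : 0 ≤ (M x) i := by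
        rw [hM, euclid_clm_apply]
        exact Finset.sum_nonneg fun j _ => mul_nonneg (hQ i j) (hxpos j)
      have h2 : 0 ≤ (N x) i := by
        rw [hN, euclid_clm_apply]
        exact Finset.sum_nonneg fun j _ =>
          mul_nonneg (hQ j i) (hxpos j)
      have : (a + M x + N x) i = a i + (M x) i + (N x) i := by
        simp [PiLp.add_apply]
      rw [this]
      have := ha i
      linarith
    obtain ⟨i0, hi0⟩ : ∃ i, d i ≠ 0 := by
      by_contra hall
      push_neg at hall
      exact hd (by ext i; exact hall i)
    have hdi0 : 0 < d i0 := lt_of_le_of_ne (hdpos i0) (Ne.symm hi0)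
    rw [PiLp.inner_apply]
    simp only [RCLike.inner_apply, starRingEnd_apply, star_trivial]
    refine Finset.sum_pos' (fun i _ => mul_nonneg (hdpos i) (le_of_lt (hgpos i))) ⟨i0, Finset.mem_univ i0, mul_pos hdi0 (hgpos i0)⟩
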